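/- Let R be a p-torsion free perfectoid ring, viewed inside the Tate ring R[1/p] (with R open). Then every topologically nilpotent element of R[1/p] lies in R. -/

import Mathlib

/-- The defining conditions on `ϖ` for a `p`-torsion free perfectoid ring. -/
def PerfectoidCond (p : ℕ) (R : Type*) [CommRing R] (ϖ : R) : Prop :=
  Ideal.span {ϖ ^ p} = Ideal.span {(p : R)} ∧
  (∀ y : R, ∃ x : R, y - x ^ p ∈ Ideal.span {(p : R)}) ∧
  (∀ x : R, x ^ p ∈ Ideal.span {(p : R)} → x ∈ Ideal.span {ϖ})

/-- every topologically nilpotent element of the Tate ring R[1/p]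
lies in R. -/
theorem stmt_12 {p : ℕ} (hp : p.Prime) (R : Type*) [CommRing R]
    (hnzd : (p : R) ∈ nonZeroDivisors R)
    (hc : IsAdicComplete (Ideal.span {(p : R)}) R)
    (ϖ : R) (hϖ : PerfectoidCond p R ϖ)
    (t : Localization.Away (p : R))
    (ht : ∀ k : ℕ, ∃ m₀ : ℕ, ∀ m : ℕ, m₀ ≤ m → ∃ r : R,
      t ^ m = algebraMap R (Localization.Away (p : R)) ((p : R) ^ k * r)) :
    ∃ x : R, algebraMap R (Localization.Away (p : R)) x = t := by
  obtain ⟨h1, -, h3⟩ := hϖ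
  set f := algebraMap R (Localization.Away (p : R)) with hf
  have hϖp_mem : ϖ ^ p ∈ Ideal.span {(p : R)} := h1 ▸ Ideal.mem_span_singleton_self _
  obtain ⟨a, ha⟩ := Ideal.mem_span_singleton.mp hϖp_mem
  have hp_mem : (p : R) ∈ Ideal.span {ϖ ^ p} := h1.symm ▸ Ideal.mem_span_singleton_self _
  obtain ⟨c, hc'⟩ := Ideal.mem_span_singleton.mp hp_mem
  have hϖpnzd : (ϖ ^ p : R) ∈ nonZeroDivisors R := by
    rw [mem_nonZeroDivisors_iff_right]
    intro x hx
    refine (mem_nonZeroDivisors_iff_right.mp hnzd) x ?_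
    calc x * (p:R) = x * ϖ ^ p * c := by rw [hc']; ring
    _ = 0 := by rw [hx, zero_mul]
  -- key lemma: p^j ∣ b^p → ϖ^j ∣ b
  have key : ∀ j : ℕ, ∀ b : R, (p : R) ^ j ∣ b ^ p → ϖ ^ j ∣ b := by
    intro j
    induction j with
    | zero => intro b _; simp
    | succ j ih =>
      intro b hb
      obtain ⟨r, hr⟩ := hb
      have hb1 : b ^ p ∈ Ideal.span {(p : R)} := by
        rw [Ideal.mem_span_singleton, hr]
        exact Dvd.dvd.mul_right (dvd_pow_self _ (Nat.succ_ne_zero j)) r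
      obtain ⟨d, hd⟩ := Ideal.mem_span_singleton.mp (h3 b hb1)
      have hcancel : d ^ p = c * ((p:R) ^ j * r) := by
        have h2 : d ^ p * ϖ ^ p = (c * ((p:R)^j * r)) * ϖ ^ p := by
          rw [← mul_comm (ϖ ^ p), ← mul_pow, ← hd, hr, pow_succ, hc']
          ring
        exact (mul_cancel_right_mem_nonZeroDivisors hϖpnzd).mp h2
      have hdvd : (p:R) ∣ d ^ p ∨ True := Or.inr trivial
      obtain ⟨e, he⟩ := ih d ⟨c * r, by rw [hcancel]; ring⟩
      exact ⟨e, by rw [hd, he, pow_succ]; ring⟩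
  -- powers of p are nonzerodivisors; algebraMap is injective
  have hpow_le : Submonoid.powers (p : R) ≤ nonZeroDivisors R := by
    intro x hx
    obtain ⟨n, rfl⟩ := hx
    exact pow_mem hnzd n
  have hinj : Function.Injective f :=
    IsLocalization.injective (Localization.Away (p : R)) hpow_le
  -- units
  have hunit : ∀ N : ℕ, IsUnit (f ((p:R) ^ N)) := fun N =>
    IsLocalization.map_units (Localization.Away (p:R))
      (⟨(p:R)^N, ⟨N, rfl⟩⟩ : Submonoid.powers (p:R))
  -- closure under p-th roots
  have root : ∀ u : Localization.Away (p : R), (∃ x : R, f x = u ^ p) → ∃ y : R, f y = u := by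
    intro u ⟨x, hx⟩
    obtain ⟨⟨b, s⟩, hs⟩ := IsLocalization.surj (Submonoid.powers (p : R)) u
    obtain ⟨N, hN⟩ := s.2
    simp only at hs
    have hN' : (p:R)^N = (s : R) := hN
    have hs' : u * f ((p:R)^N) = f b := by rw [hN']; exact hs
    have hbp : b ^ p = x * (p:R)^(N * p) := by
      apply hinj
      have h2 : f (b ^ p) = u ^ p * f ((p:R)^N) ^ p := by
        rw [map_pow, ← hs', mul_pow]
      rw [h2, ← hx, ← map_pow f ((p:R)^N) p, ← map_mul, ← pow_mul]
    obtain ⟨d, hdd⟩ := key (N * p) b ⟨x, by rw [hbp]; ring⟩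
    -- ϖ^(N*p) = (ϖ^p)^N = (p*a)^N = p^N * a^N
    have hb' : b = (p:R)^N * (a ^ N * d) := by
      rw [hdd, Nat.mul_comm N p, pow_mul, ha, mul_pow]; ring
    refine ⟨a ^ N * d, ?_⟩
    have := hs'
    rw [hb', map_mul] at this
    have hu := hunit N
    obtain ⟨v, hv⟩ := hu
    rw [mul_comm u] at this
    exact ((Units.mul_right_inj v).mp (by rw [hv]; exact this)).symm
  -- iterate: t^(p^j) in R ⟹ t in R
  have iter : ∀ j : ℕ, (∃ x : R, f x = t ^ (p ^ j)) → ∃ x : R, f x = t := by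
    intro j
    induction j with
    | zero => simpa using id
    | succ j ih =>
      intro ⟨x, hx⟩
      refine ih (root (t ^ (p ^ j)) ⟨x, ?_⟩)
      rw [hx, ← pow_mul, ← pow_succ]
  obtain ⟨m₀, hm₀⟩ := ht 1
  have hle : m₀ ≤ p ^ m₀ :=
    le_trans (Nat.lt_two_pow_self (n := m₀)).le (Nat.pow_le_pow_left hp.two_le m₀)
  obtain ⟨r, hr⟩ := hm₀ (p ^ m₀) hle
  exact iter m₀ ⟨(p:R)^1 * r, hr.symm⟩
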